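/- Let p ≥ 2 and f as in the change of variables, i.e., f'(t) = (1 + 2^{p-1} f(t)^p)^{-1/p} on [0,∞), f(0)=0, f odd. Then |f(t)| ≤ 2^{1/(2p)} |t|^{1/2} for all t ∈ ℝ. -/

import Mathlib

/-- `|f t| ≤ 2^(1/(2p)) |t|^(1/2)` for all `t`. -/
theorem stmt1 (p : ℝ) (hp : 2 ≤ p) (f : ℝ → ℝ)
    (hodd : ∀ t : ℝ, f (-t) = - f t)
    (hf0 : f 0 = 0)
    (hf' : ∀ t : ℝ, HasDerivAt f ((1 + 2 ^ (p - 1) * |f t| ^ p) ^ (-(1 / p))) t) :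
    ∀ t : ℝ, |f t| ≤ 2 ^ (1 / (2 * p)) * |t| ^ ((1 : ℝ) / 2) := by
  have hp0 : (0:ℝ) < p := by linarith
  set c : ℝ := 2 ^ (1/p) with hc
  have hc0 : (0:ℝ) < c := Real.rpow_pos_of_pos two_pos _
  have hfd : ∀ s : ℝ, (0:ℝ) < (1 + 2 ^ (p - 1) * |f s| ^ p) ^ (-(1 / p)) := by
    intro s
    apply Real.rpow_pos_of_pos
    positivity
  have hmono : Monotone f := by
    apply monotone_of_deriv_nonneg
    · exact fun s => (hf' s).differentiableAt
    · intro s; rw [(hf' s).deriv]; exact (hfd s).le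
  have hfnonneg : ∀ s : ℝ, 0 ≤ s → 0 ≤ f s := fun s hs => hf0 ▸ hmono hs
  -- derivative bound
  have key : ∀ s : ℝ, 2 * f s * ((1 + 2 ^ (p - 1) * |f s| ^ p) ^ (-(1 / p))) ≤ c := by
    intro s
    rcases le_or_gt (f s) 0 with h | h
    · have h1 := hfd s
      nlinarith
    · have habs : |f s| = f s := abs_of_pos h
      have hA : (0:ℝ) < 2 ^ (p-1) * (f s) ^ p := by positivity
      have h1 : (1 + 2 ^ (p - 1) * |f s| ^ p) ^ (-(1 / p)) ≤
          (2 ^ (p-1) * (f s) ^ p) ^ (-(1/p)) := by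
        rw [habs]
        exact Real.rpow_le_rpow_of_nonpos hA (by linarith)
          (neg_nonpos.mpr (by positivity))
      have h2 : (2 ^ (p-1) * (f s) ^ p : ℝ) ^ (-(1/p)) =
          2 ^ ((p-1) * (-(1/p))) * (f s)⁻¹ := by
        rw [Real.mul_rpow (by positivity) (by positivity),
          ← Real.rpow_mul (by norm_num : (0:ℝ) ≤ 2),
          ← Real.rpow_mul h.le,
          (by field_simp : p * -(1/p) = (-1:ℝ)), Real.rpow_neg_one]
      have h3 : 2 * f s * (2 ^ ((p-1) * (-(1/p))) * (f s)⁻¹) = c := by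
        rw [hc]
        have : (2:ℝ) * f s * (2 ^ ((p-1) * (-(1/p))) * (f s)⁻¹)
            = 2 ^ (1:ℝ) * 2 ^ ((p-1) * (-(1/p))) := by
          rw [Real.rpow_one]; field_simp
        rw [this, ← Real.rpow_add two_pos]
        congr 1
        field_simp
        ring
      calc 2 * f s * ((1 + 2 ^ (p - 1) * |f s| ^ p) ^ (-(1 / p)))
          ≤ 2 * f s * ((2 ^ (p-1) * (f s) ^ p) ^ (-(1/p))) := by
            apply mul_le_mul_of_nonneg_left h1 (by linarith)
        _ = c := by rw [h2]; exact h3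
  -- main bound for t ≥ 0
  have main : ∀ t : ℝ, 0 ≤ t → f t ^ 2 ≤ c * t := by
    intro t ht
    have hmono2 : Monotone (fun s => c * s - f s ^ 2) := by
      apply monotone_of_deriv_nonneg
      · intro s
        exact (((hasDerivAt_id s).const_mul c).sub ((hf' s).pow 2)).differentiableAt
      · intro s
        have hd : HasDerivAt (fun s => c * s - f s ^ 2)
            (c * 1 - 2 * f s ^ 1 * ((1 + 2 ^ (p - 1) * |f s| ^ p) ^ (-(1 / p)))) s := by
          exact ((hasDerivAt_id s).const_mul c).sub ((hf' s).pow 2)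
        rw [hd.deriv]
        have := key s
        simp only [pow_one, mul_one]
        linarith
    have := hmono2 ht
    simp only [hf0, mul_zero] at this
    nlinarith
  -- wrap up
  have final : ∀ t : ℝ, 0 ≤ t → |f t| ≤ 2 ^ (1 / (2 * p)) * t ^ ((1 : ℝ) / 2) := by
    intro t ht
    have h1 := main t ht
    have h2 : |f t| = Real.sqrt (f t ^ 2) := (Real.sqrt_sq_eq_abs _).symm
    rw [h2]
    calc Real.sqrt (f t ^ 2) ≤ Real.sqrt (c * t) := Real.sqrt_le_sqrt h1
      _ = Real.sqrt c * Real.sqrt t := Real.sqrt_mul hc0.le t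
      _ = 2 ^ (1 / (2 * p)) * t ^ ((1 : ℝ) / 2) := by
          rw [Real.sqrt_eq_rpow, Real.sqrt_eq_rpow, hc,
            ← Real.rpow_mul (by norm_num : (0:ℝ) ≤ 2)]
          congr 2
          field_simp
  intro t
  rcases le_or_gt 0 t with ht | ht
  · rw [abs_of_nonneg ht]; exact final t ht
  · have h1 : f (-t) = - f t := hodd t
    have h2 : |f t| = |f (-t)| := by rw [h1, abs_neg]
    rw [h2, abs_of_neg ht]
    exact final (-t) (by linarith)
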